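/- For coprime positive integers a and c, the Dedekind sums satisfy the reciprocity formula s(a,c) - s(-c,a) = -1/4 + (1/12)(c/a + a/c + 1/(ac)). -/

import Mathlib

open Finset

/-- The sawtooth function `((x))`: `x - ⌊x⌋ - 1/2` for non-integral `x`, and `0` for `x ∈ ℤ`. -/
noncomputable def saw (x : ℝ) : ℝ := if Int.fract x = 0 then 0 else x - ⌊x⌋ - 1 / 2

/-- The Dedekind sum `s(a,c) = ∑_{n mod c} ((n/c))((na/c))`. -/
noncomputable def dedekindS (a : ℤ) (c : ℕ) : ℝ :=
  ∑ n ∈ Finset.range c, saw ((n : ℝ) / c) * saw ((n : ℝ) * (a : ℝ) / c)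

lemma saw_eq_fract {x : ℝ} (hx : Int.fract x ≠ 0) : saw x = Int.fract x - 1 / 2 := by
  unfold saw
  rw [if_neg hx, ← Int.self_sub_floor]

lemma saw_neg (x : ℝ) : saw (-x) = - saw x := by
  by_cases hx : Int.fract x = 0
  · unfold saw
    simp [Int.fract_neg_eq_zero.2 hx, hx]
  · have h2 : Int.fract (-x) ≠ 0 := fun h => hx (Int.fract_neg_eq_zero.1 h)
    rw [saw_eq_fract hx, saw_eq_fract h2, Int.fract_neg hx]
    ring

/-- permutation lemma: multiplication by a unit permutes residues mod `c`. -/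
lemma sum_mod_perm {M : Type*} [AddCommMonoid M] (a c : ℕ) (h : Nat.Coprime a c) (φ : ℕ → M) :
    ∑ r ∈ range c, φ (a * r % c) = ∑ r ∈ range c, φ r := by
  rcases Nat.lt_or_ge c 2 with hc | hc
  · interval_cases c
    · simp
    · simp
  obtain ⟨b, -, hb⟩ := Nat.exists_mul_mod_eq_one_of_coprime h hc
  have hc0 : 0 < c := by omega
  have inv : ∀ u v : ℕ, u * v % c = 1 → ∀ x, x < c → u * (v * x % c) % c = x := by
    intro u v huv x hx
    have h1 : u * v ≡ 1 [MOD c] := by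
      unfold Nat.ModEq
      rw [huv, Nat.mod_eq_of_lt (by omega)]
    have h2 : u * (v * x % c) ≡ x [MOD c] := by
      calc u * (v * x % c) ≡ u * (v * x) [MOD c] := Nat.ModEq.mul_left u (Nat.mod_modEq _ _)
        _ = (u * v) * x := by ring
        _ ≡ 1 * x [MOD c] := h1.mul_right x
        _ = x := one_mul x
    calc u * (v * x % c) % c = x % c := h2
      _ = x := Nat.mod_eq_of_lt hx
  refine Finset.sum_nbij' (fun r => a * r % c) (fun s => b * s % c) ?_ ?_ ?_ ?_ ?_
  · intro r _; exact mem_range.2 (Nat.mod_lt _ hc0)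
  · intro s _; exact mem_range.2 (Nat.mod_lt _ hc0)
  · intro r hr; exact inv b a (by rwa [Nat.mul_comm]) r (mem_range.1 hr)
  · intro s hs; exact inv a b hb s (mem_range.1 hs)
  · intro r _; rfl

/-- lattice point counting lemma. -/
lemma count_aux (a c : ℕ) (h : Nat.Coprime a c) (ha : 0 < a) (hc : 0 < c) :
    ∑ r ∈ Ico 1 c, (a*r/c) * (a*r/c + 1) + ∑ v ∈ Ico 1 a, 2*(v*(c*v/a))
      = ∑ v ∈ Ico 1 a, 2*(v*(c-1)) := by
  have step1 : ∀ r ∈ Ico 1 c,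
      (a*r/c) * (a*r/c + 1) = ∑ v ∈ Ico 1 a, (if c*v ≤ a*r then 2*v else 0) := by
    intro r hr
    rw [mem_Ico] at hr
    have hf : a*r/c < a := by
      rw [Nat.div_lt_iff_lt_mul hc]
      exact mul_lt_mul_of_pos_left hr.2 ha
    rw [← Finset.sum_filter]
    have hfil : Finset.filter (fun v => c*v ≤ a*r) (Ico 1 a) = Ico 1 (a*r/c + 1) := by
      ext v
      simp only [mem_filter, mem_Ico, Nat.lt_succ_iff]
      constructor
      · rintro ⟨⟨h1, _⟩, h3⟩
        exact ⟨h1, by rw [Nat.le_div_iff_mul_le hc, Nat.mul_comm v c]; omega⟩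
      · rintro ⟨h1, h2⟩
        have h2' := h2
        rw [Nat.le_div_iff_mul_le hc, Nat.mul_comm v c] at h2'
        exact ⟨⟨h1, lt_of_le_of_lt h2 hf⟩, h2'⟩
    rw [hfil]
    have : ∑ v ∈ Ico 1 (a*r/c + 1), 2*v = ∑ v ∈ range (a*r/c + 1), 2*v := by
      apply Finset.sum_subset
      · intro x hx; rw [mem_range]; rw [mem_Ico] at hx; omega
      · intro x hx hx'
        rw [mem_range] at hx; rw [mem_Ico] at hx'
        have : x = 0 := by omega
        subst this; rfl
    rw [this, ← Finset.mul_sum]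
    have h2 := Finset.sum_range_id_mul_two (a*r/c + 1)
    simp only [Nat.add_sub_cancel] at h2
    rw [Nat.mul_comm 2 (∑ v ∈ range (a*r/c+1), v), h2, Nat.mul_comm]
  rw [Finset.sum_congr rfl step1, Finset.sum_comm, ← Finset.sum_add_distrib]
  apply Finset.sum_congr rfl
  intro v hv
  rw [mem_Ico] at hv
  have hg : c*v/a < c := by
    rw [Nat.div_lt_iff_lt_mul ha]
    exact mul_lt_mul_of_pos_left hv.2 hc
  have hne : ∀ r, c*v ≠ a*r := by
    intro r heq
    have : a ∣ c * v := ⟨r, heq⟩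
    have : a ∣ v := h.dvd_of_dvd_mul_left this
    have := Nat.le_of_dvd (by omega) this
    omega
  rw [← Finset.sum_filter]
  have hfil : Finset.filter (fun r => c*v ≤ a*r) (Ico 1 c) = Ico (c*v/a + 1) c := by
    ext r
    simp only [mem_filter, mem_Ico]
    have hiff : c*v/a < r ↔ c*v < a*r := by
      rw [Nat.div_lt_iff_lt_mul ha, Nat.mul_comm r a]
    constructor
    · rintro ⟨⟨_, h2⟩, h3⟩
      have : c*v < a*r := lt_of_le_of_ne h3 (hne r)
      rw [← hiff] at this
      exact ⟨this, h2⟩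
    · rintro ⟨h1, h2⟩
      have hlt : c*v < a*r := hiff.1 h1
      exact ⟨⟨le_trans (Nat.succ_le_succ (Nat.zero_le _)) h1, h2⟩, le_of_lt hlt⟩
  rw [hfil, Finset.sum_const, Nat.card_Ico, smul_eq_mul]
  have h1 : c*v/a + 1 ≤ c := hg
  zify [h1, hv.1, hc]
  ring

lemma fract_natCast_div (m c : ℕ) (hc : 0 < c) :
    Int.fract ((m:ℝ)/c) = ((m % c : ℕ):ℝ)/c := by
  conv_lhs => rw [← Nat.div_add_mod m c]
  push_cast
  have hc' : (c:ℝ) ≠ 0 := by exact_mod_cast hc.ne'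
  have e1 : (c:ℝ) * ((m/c : ℕ):ℝ) / c = ((m/c : ℕ):ℝ) := by field_simp
  rw [add_div, e1, Int.fract_natCast_add]
  apply Int.fract_eq_self.2
  constructor
  · positivity
  · rw [div_lt_one (by positivity)]
    exact_mod_cast Nat.mod_lt m hc

lemma sum_Ico_one {M : Type*} [AddCommMonoid M] (f : ℕ → M) (n : ℕ) (h0 : f 0 = 0) :
    ∑ x ∈ Ico 1 n, f x = ∑ x ∈ range n, f x := by
  apply Finset.sum_subset
  · intro x hx; rw [mem_range]; rw [mem_Ico] at hx; omega
  · intro x hx hx'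
    rw [mem_range] at hx; rw [mem_Ico] at hx'
    have : x = 0 := by omega
    subst this; exact h0

lemma gauss1 (c : ℕ) : 2 * ∑ n ∈ range c, (n:ℤ) = c^2 - c := by
  induction c with
  | zero => simp
  | succ k ih => rw [Finset.sum_range_succ]; push_cast; linear_combination ih

lemma gauss2 (c : ℕ) : 6 * ∑ n ∈ range c, (n:ℤ)^2 = 2*c^3 - 3*c^2 + c := by
  induction c with
  | zero => simp
  | succ k ih => rw [Finset.sum_range_succ]; push_cast; linear_combination ih

/-- evaluation of a Dedekind sum as an integer sum. -/
lemma dedekind_eval (a c : ℕ) (ha : 0 < a) (hc : 0 < c) (h : Nat.Coprime a c) :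
    dedekindS (a:ℤ) c =
      ((∑ n ∈ range c, (2*(n:ℤ) - c) * (2*((a*n % c : ℕ):ℤ) - c) : ℤ) : ℝ) / (4*c^2) - 1/4 := by
  have hc' : (c:ℝ) ≠ 0 := by exact_mod_cast hc.ne'
  have hterm : ∀ n ∈ Ico 1 c,
      saw ((n : ℝ) / c) * saw ((n : ℝ) * (((a:ℤ)) : ℝ) / c)
        = ((2*(n:ℝ) - c) * (2*((a*n % c : ℕ):ℝ) - c)) / (4*(c:ℝ)^2) := by
    intro n hn
    rw [mem_Ico] at hn
    have hfr1 : Int.fract ((n:ℝ)/c) = (n:ℝ)/c := by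
      apply Int.fract_eq_self.2
      refine ⟨by positivity, ?_⟩
      rw [div_lt_one (by positivity)]
      exact_mod_cast hn.2
    have hne1 : Int.fract ((n:ℝ)/c) ≠ 0 := by
      rw [hfr1]
      have : (0:ℝ) < (n:ℝ)/c := by
        apply div_pos _ (by positivity)
        exact_mod_cast hn.1
      exact this.ne'
    have e2 : (n:ℝ) * (((a:ℤ)):ℝ) / c = ((a*n : ℕ):ℝ)/c := by push_cast; ring
    have hrho : a*n % c ≠ 0 := by
      intro h0
      have hdvd : c ∣ a*n := Nat.dvd_of_mod_eq_zero h0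
      have hdvd2 : c ∣ n := (Nat.Coprime.dvd_of_dvd_mul_left h.symm hdvd)
      have := Nat.le_of_dvd (by omega) hdvd2
      omega
    have hfr2 : Int.fract (((a*n:ℕ):ℝ)/c) = ((a*n % c : ℕ):ℝ)/c := fract_natCast_div _ _ hc
    have hne2 : Int.fract (((a*n:ℕ):ℝ)/c) ≠ 0 := by
      rw [hfr2]
      have : (0:ℝ) < ((a*n % c : ℕ):ℝ)/c := by
        apply div_pos _ (by positivity)
        exact_mod_cast Nat.pos_of_ne_zero hrho
      exact this.ne'
    rw [e2, saw_eq_fract hne1, saw_eq_fract hne2, hfr1, hfr2]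
    field_simp
    ring
  have h0 : saw ((0:ℕ) / (c:ℝ)) * saw ((0:ℕ) * (((a:ℤ)):ℝ) / c) = 0 := by
    norm_num [saw]
  rw [dedekindS, range_eq_Ico, Finset.sum_eq_sum_Ico_succ_bot hc,
    Finset.sum_congr rfl hterm, h0, zero_add]
  have hsplit : (∑ n ∈ Ico 0 c, (2*(n:ℤ) - c) * (2*((a*n % c : ℕ):ℤ) - c))
      = (c:ℤ)^2 + ∑ n ∈ Ico 1 c, (2*(n:ℤ) - c) * (2*((a*n % c : ℕ):ℤ) - c) := by
    rw [Finset.sum_eq_sum_Ico_succ_bot hc]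
    have hz : a * 0 % c = 0 := by simp
    rw [hz]
    push_cast
    ring
  rw [hsplit, Int.cast_add, Int.cast_sum, add_div, Finset.sum_div]
  have hcong : ∀ n ∈ Ico 1 c,
      (((2*(n:ℤ) - c) * (2*((a*n % c : ℕ):ℤ) - c) : ℤ):ℝ)/(4*(c:ℝ)^2)
        = (2*(n:ℝ) - c) * (2*((a*n % c : ℕ):ℝ) - c)/(4*(c:ℝ)^2) := by
    intro n _
    norm_cast
  rw [Finset.sum_congr rfl hcong]
  have hc2 : (((c:ℤ)^2 : ℤ):ℝ)/(4*(c:ℝ)^2) = 1/4 := by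
    push_cast
    field_simp
  rw [hc2]
  ring

lemma dedekind_neg (c : ℕ) (a : ℕ) : dedekindS (-(c:ℤ)) a = - dedekindS (c:ℤ) a := by
  rw [dedekindS, dedekindS, ← Finset.sum_neg_distrib]
  apply Finset.sum_congr rfl
  intro n _
  have e : (n:ℝ) * ((-(c:ℤ) : ℤ):ℝ)/a = -((n:ℝ)*(((c:ℤ)):ℝ)/a) := by push_cast; ring
  rw [e, saw_neg]
  ring

/-- Dedekind reciprocity: for coprime positive integers `a, c`,
`s(a,c) - s(-c,a) = -1/4 + (1/12)(c/a + a/c + 1/(ac))`. -/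
theorem dedekindS_reciprocity (a c : ℕ) (ha : 0 < a) (hc : 0 < c) (h : Nat.gcd a c = 1) :
    dedekindS (a : ℤ) c - dedekindS (-(c : ℤ)) a =
      -(1 / 4) + (1 / 12) * ((c : ℝ) / a + (a : ℝ) / c + 1 / ((a : ℝ) * c)) := by
  have hco : Nat.Coprime a c := h
  have hcoc : Nat.Coprime c a := hco.symm
  have ha' : (a:ℝ) ≠ 0 := by exact_mod_cast ha.ne'
  have hc' : (c:ℝ) ≠ 0 := by exact_mod_cast hc.ne'
  -- ℤ-side preliminaries
  have hmodA : ∀ n : ℕ, ((a*n % c : ℕ) : ℤ) = (a:ℤ)*(n:ℤ) - (c:ℤ)*((a*n/c : ℕ):ℤ) := by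
    intro n
    have h1 : ((c:ℤ))*((a*n/c : ℕ):ℤ) + ((a*n % c : ℕ):ℤ) = (a:ℤ)*(n:ℤ) := by
      exact_mod_cast congrArg (fun t : ℕ => (t:ℤ)) (Nat.div_add_mod (a*n) c)
    linarith
  have hmodB : ∀ v : ℕ, ((c*v % a : ℕ) : ℤ) = (c:ℤ)*(v:ℤ) - (a:ℤ)*((c*v/a : ℕ):ℤ) := by
    intro v
    have h1 : ((a:ℤ))*((c*v/a : ℕ):ℤ) + ((c*v % a : ℕ):ℤ) = (c:ℤ)*(v:ℤ) := by
      exact_mod_cast congrArg (fun t : ℕ => (t:ℤ)) (Nat.div_add_mod (c*v) a)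
    linarith
  have hP1 : ∑ n ∈ range c, ((a*n % c : ℕ):ℤ) = ∑ n ∈ range c, (n:ℤ) := by
    simpa using sum_mod_perm a c hco (fun m => (m:ℤ))
  have hP2 : ∑ n ∈ range c, ((a*n % c : ℕ):ℤ)^2 = ∑ n ∈ range c, (n:ℤ)^2 := by
    simpa using sum_mod_perm a c hco (fun m => ((m:ℤ))^2)
  have hs1 : ∑ v ∈ range a, ((c*v % a : ℕ):ℤ) = ∑ v ∈ range a, (v:ℤ) := by
    simpa using sum_mod_perm c a hcoc (fun m => (m:ℤ))
  have m1 : ∑ n ∈ range c, ((a*n % c : ℕ):ℤ)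
      = (a:ℤ) * (∑ n ∈ range c, (n:ℤ)) - (c:ℤ) * ∑ n ∈ range c, ((a*n/c : ℕ):ℤ) := by
    rw [Finset.mul_sum, Finset.mul_sum, ← Finset.sum_sub_distrib]
    exact Finset.sum_congr rfl fun n _ => hmodA n
  have m2 : ∑ n ∈ range c, ((a*n % c : ℕ):ℤ)^2
      = (a:ℤ)^2 * (∑ n ∈ range c, (n:ℤ)^2)
        - 2*(a:ℤ)*(c:ℤ) * (∑ n ∈ range c, (n:ℤ)*((a*n/c : ℕ):ℤ))
        + (c:ℤ)^2 * ∑ n ∈ range c, ((a*n/c : ℕ):ℤ)^2 := by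
    rw [Finset.mul_sum, Finset.mul_sum, Finset.mul_sum, ← Finset.sum_sub_distrib,
      ← Finset.sum_add_distrib]
    exact Finset.sum_congr rfl fun n _ => by rw [hmodA n]; ring
  have m3 : ∑ n ∈ range c, (n:ℤ)*((a*n % c : ℕ):ℤ)
      = (a:ℤ) * (∑ n ∈ range c, (n:ℤ)^2)
        - (c:ℤ) * (∑ n ∈ range c, (n:ℤ)*((a*n/c : ℕ):ℤ)) := by
    rw [Finset.mul_sum, Finset.mul_sum, ← Finset.sum_sub_distrib]
    exact Finset.sum_congr rfl fun n _ => by rw [hmodA n]; ring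
  have mB : ∑ v ∈ range a, (v:ℤ)*((c*v % a : ℕ):ℤ)
      = (c:ℤ) * (∑ v ∈ range a, (v:ℤ)^2)
        - (a:ℤ) * (∑ v ∈ range a, (v:ℤ)*((c*v/a : ℕ):ℤ)) := by
    rw [Finset.mul_sum, Finset.mul_sum, ← Finset.sum_sub_distrib]
    exact Finset.sum_congr rfl fun v _ => by rw [hmodB v]; ring
  have zA : (∑ n ∈ range c, (2*(n:ℤ) - c) * (2*((a*n % c : ℕ):ℤ) - c))
      = 4*(∑ n ∈ range c, (n:ℤ)*((a*n % c : ℕ):ℤ)) - 2*(c:ℤ)*(∑ n ∈ range c, (n:ℤ))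
        - 2*(c:ℤ)*(∑ n ∈ range c, ((a*n % c : ℕ):ℤ)) + (c:ℤ)*(c:ℤ)^2 := by
    rw [Finset.mul_sum, Finset.mul_sum, Finset.mul_sum,
      show ((c:ℤ)*(c:ℤ)^2) = ∑ _x ∈ range c, (c:ℤ)^2 by
        rw [Finset.sum_const, card_range, nsmul_eq_mul],
      ← Finset.sum_sub_distrib, ← Finset.sum_sub_distrib, ← Finset.sum_add_distrib]
    exact Finset.sum_congr rfl fun n _ => by ring
  have zB : (∑ v ∈ range a, (2*(v:ℤ) - a) * (2*((c*v % a : ℕ):ℤ) - a))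
      = 4*(∑ v ∈ range a, (v:ℤ)*((c*v % a : ℕ):ℤ)) - 2*(a:ℤ)*(∑ v ∈ range a, (v:ℤ))
        - 2*(a:ℤ)*(∑ v ∈ range a, ((c*v % a : ℕ):ℤ)) + (a:ℤ)*(a:ℤ)^2 := by
    rw [Finset.mul_sum, Finset.mul_sum, Finset.mul_sum,
      show ((a:ℤ)*(a:ℤ)^2) = ∑ _x ∈ range a, (a:ℤ)^2 by
        rw [Finset.sum_const, card_range, nsmul_eq_mul],
      ← Finset.sum_sub_distrib, ← Finset.sum_sub_distrib, ← Finset.sum_add_distrib]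
    exact Finset.sum_congr rfl fun v _ => by ring
  -- counting identity, cast to ℤ and converted to sums over `range`
  have hE : (∑ r ∈ range c, ((a*r/c : ℕ):ℤ)^2) + (∑ r ∈ range c, ((a*r/c : ℕ):ℤ))
      + 2*(∑ v ∈ range a, (v:ℤ)*((c*v/a : ℕ):ℤ))
      = 2*((c:ℤ)-1)*(∑ v ∈ range a, (v:ℤ)) := by
    have hEn := count_aux a c hco ha hc
    have hc1 : 1 ≤ c := hc
    have hEZ : ∑ r ∈ Ico 1 c, (((a*r/c : ℕ):ℤ)*(((a*r/c : ℕ):ℤ)+1))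
        + ∑ v ∈ Ico 1 a, 2*((v:ℤ)*((c*v/a : ℕ):ℤ))
        = ∑ v ∈ Ico 1 a, 2*((v:ℤ)*((c:ℤ)-1)) := by
      have h' := congrArg (fun t : ℕ => (t:ℤ)) hEn
      simp only [Nat.cast_sum, Nat.cast_add, Nat.cast_mul, Nat.cast_one, Nat.cast_ofNat,
        Nat.cast_sub hc1] at h'
      exact h'
    have e1 : ∑ r ∈ Ico 1 c, (((a*r/c : ℕ):ℤ)*(((a*r/c : ℕ):ℤ)+1))
        = ∑ r ∈ range c, (((a*r/c : ℕ):ℤ)*(((a*r/c : ℕ):ℤ)+1)) := by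
      apply sum_Ico_one
      norm_num
    have e2 : ∑ v ∈ Ico 1 a, 2*((v:ℤ)*((c*v/a : ℕ):ℤ))
        = ∑ v ∈ range a, 2*((v:ℤ)*((c*v/a : ℕ):ℤ)) := by
      apply sum_Ico_one
      norm_num
    have e3 : ∑ v ∈ Ico 1 a, 2*((v:ℤ)*((c:ℤ)-1))
        = ∑ v ∈ range a, 2*((v:ℤ)*((c:ℤ)-1)) := by
      apply sum_Ico_one
      norm_num
    rw [e1, e2, e3] at hEZ
    have e4 : ∑ r ∈ range c, (((a*r/c : ℕ):ℤ)*(((a*r/c : ℕ):ℤ)+1))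
        = (∑ r ∈ range c, ((a*r/c : ℕ):ℤ)^2) + (∑ r ∈ range c, ((a*r/c : ℕ):ℤ)) := by
      rw [← Finset.sum_add_distrib]
      exact Finset.sum_congr rfl fun r _ => by ring
    have e5 : ∑ v ∈ range a, 2*((v:ℤ)*((c*v/a : ℕ):ℤ))
        = 2*(∑ v ∈ range a, (v:ℤ)*((c*v/a : ℕ):ℤ)) := by
      rw [Finset.mul_sum]
    have e6 : ∑ v ∈ range a, 2*((v:ℤ)*((c:ℤ)-1))
        = 2*((c:ℤ)-1)*(∑ v ∈ range a, (v:ℤ)) := by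
      rw [Finset.mul_sum]
      exact Finset.sum_congr rfl fun v _ => by ring
    rw [e4, e5, e6] at hEZ
    linarith
  -- assemble the key integer identity
  have s1 : (c:ℤ) * (∑ n ∈ range c, ((a*n/c : ℕ):ℤ)) = ((a:ℤ)-1) * (∑ n ∈ range c, (n:ℤ)) := by
    linear_combination m1 - hP1
  have s2 : 2*(a:ℤ)*(∑ n ∈ range c, (n:ℤ)*((a*n % c : ℕ):ℤ))
      + (c:ℤ)^2*(∑ n ∈ range c, ((a*n/c : ℕ):ℤ)^2)
      = ((a:ℤ)^2+1)*(∑ n ∈ range c, (n:ℤ)^2) := by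
    linear_combination 2*(a:ℤ)*m3 + hP2 - m2
  have s6 : 2*(a:ℤ)^2*(c:ℤ)*(∑ n ∈ range c, (n:ℤ)*((a*n % c : ℕ):ℤ))
      + 2*(c:ℤ)^3*(∑ v ∈ range a, (v:ℤ)*((c*v % a : ℕ):ℤ))
      = (a:ℤ)*(c:ℤ)*((a:ℤ)^2+1)*(∑ n ∈ range c, (n:ℤ)^2)
        + (a:ℤ)*(c:ℤ)^2*((a:ℤ)-1)*(∑ n ∈ range c, (n:ℤ))
        - 2*(a:ℤ)*(c:ℤ)^3*((c:ℤ)-1)*(∑ v ∈ range a, (v:ℤ))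
        + 2*(c:ℤ)^4*(∑ v ∈ range a, (v:ℤ)^2) := by
    linear_combination (a:ℤ)*(c:ℤ)*s2 - (a:ℤ)*(c:ℤ)^3*hE + (a:ℤ)*(c:ℤ)^2*s1 + 2*(c:ℤ)^3*mB
  have s8 : 12*(a:ℤ)^2*(c:ℤ)*(∑ n ∈ range c, (n:ℤ)*((a*n % c : ℕ):ℤ))
      + 12*(c:ℤ)^3*(∑ v ∈ range a, (v:ℤ)*((c*v % a : ℕ):ℤ))
      = (a:ℤ)*(c:ℤ)*((a:ℤ)^2+1)*(2*(c:ℤ)^3-3*(c:ℤ)^2+c)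
        + 3*(a:ℤ)*(c:ℤ)^2*((a:ℤ)-1)*((c:ℤ)^2-c)
        - 6*(a:ℤ)*(c:ℤ)^3*((c:ℤ)-1)*((a:ℤ)^2-a)
        + 2*(c:ℤ)^4*(2*(a:ℤ)^3-3*(a:ℤ)^2+a) := by
    linear_combination 6*s6 + (a:ℤ)*(c:ℤ)*((a:ℤ)^2+1)*gauss2 c + 3*(a:ℤ)*(c:ℤ)^2*((a:ℤ)-1)*gauss1 c
      - 6*(a:ℤ)*(c:ℤ)^3*((c:ℤ)-1)*gauss1 a + 2*(c:ℤ)^4*gauss2 a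
  have s9 : (∑ n ∈ range c, (2*(n:ℤ) - c) * (2*((a*n % c : ℕ):ℤ) - c))
      = 4*(∑ n ∈ range c, (n:ℤ)*((a*n % c : ℕ):ℤ)) - (c:ℤ)^3 + 2*(c:ℤ)^2 := by
    linear_combination zA - 2*(c:ℤ)*hP1 - 2*(c:ℤ)*gauss1 c
  have s10 : (∑ v ∈ range a, (2*(v:ℤ) - a) * (2*((c*v % a : ℕ):ℤ) - a))
      = 4*(∑ v ∈ range a, (v:ℤ)*((c*v % a : ℕ):ℤ)) - (a:ℤ)^3 + 2*(a:ℤ)^2 := by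
    linear_combination zB - 2*(a:ℤ)*hs1 - 2*(a:ℤ)*gauss1 a
  have keyZ : 3*(a:ℤ)^2*(c:ℤ)*(∑ n ∈ range c, (2*(n:ℤ) - c) * (2*((a*n % c : ℕ):ℤ) - c))
      + 3*(c:ℤ)^3*(∑ v ∈ range a, (2*(v:ℤ) - a) * (2*((c*v % a : ℕ):ℤ) - a))
      = (a:ℤ)*(c:ℤ)^2*((a:ℤ)^2+(c:ℤ)^2+3*(a:ℤ)*(c:ℤ)+1) := by
    linear_combination 3*(a:ℤ)^2*(c:ℤ)*s9 + 3*(c:ℤ)^3*s10 + s8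
  -- conclude over ℝ
  rw [dedekind_neg, sub_neg_eq_add, dedekind_eval a c ha hc hco, dedekind_eval c a hc ha hcoc]
  have keyR : 3*(a:ℝ)^2*(c:ℝ)*((∑ n ∈ range c, (2*(n:ℤ) - c) * (2*((a*n % c : ℕ):ℤ) - c) : ℤ):ℝ)
      + 3*(c:ℝ)^3*((∑ v ∈ range a, (2*(v:ℤ) - a) * (2*((c*v % a : ℕ):ℤ) - a) : ℤ):ℝ)
      = (a:ℝ)*(c:ℝ)^2*((a:ℝ)^2+(c:ℝ)^2+3*(a:ℝ)*(c:ℝ)+1) := by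
    exact_mod_cast keyZ
  field_simp
  apply mul_left_cancel₀ hc'
  linear_combination 4*keyR
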